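/- For k = ℤ and R = ℤ[X], the n-th Hasse derivative h_n belongs to D^(n) for every n ≥ 0 (and for n ≥ 1 it does not belong to D^(n−1)). -/

import Mathlib

open TensorProduct

noncomputable section

namespace GrothDiff

variable (k R : Type*) [CommRing k] [CommRing R] [Algebra k R]

/-- The action of `R ⊗[k] R` on `Hom_k(R,R)` given by `((a₁ ⊗ a₂) • f) x = a₁ * f (a₂ * x)`. -/
def act : (R ⊗[k] R) →ₗ[k] (R →ₗ[k] R) →ₗ[k] (R →ₗ[k] R) :=
  TensorProduct.lift <| LinearMap.mk₂ k
    (fun a₁ a₂ =>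
      { toFun := fun f => LinearMap.mulLeft k a₁ ∘ₗ f ∘ₗ LinearMap.mulLeft k a₂
        map_add' := fun f g => by ext x; simp [mul_add]
        map_smul' := fun c f => by ext x; simp [mul_smul_comm] })
    (fun a b c => by ext f x; simp [add_mul])
    (fun c a b => by ext f x; simp [smul_mul_assoc])
    (fun a b c => by ext f x; simp [add_mul, mul_add])
    (fun a b c => by ext f x; simp [smul_mul_assoc, mul_smul_comm])

/-- `Dm k R n` is the Grothendieck order filtration `D^(n-1)`; in particular
`Dm k R 0 = D^(-1) = {0}` and `Dm k R (n+1) = D^(n)`. -/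
def Dm : ℕ → Set (R →ₗ[k] R)
  | 0 => {0}
  | n + 1 =>
      {f | ∀ r : R,
        f ∘ₗ LinearMap.mulLeft k r - LinearMap.mulLeft k r ∘ₗ f ∈ Dm n}

/-- `D k R n` is the Grothendieck order filtration `D^(n)` for `n ≥ 0`. -/
def D (n : ℕ) : Set (R →ₗ[k] R) := Dm k R (n + 1)

/-- The module of Grothendieck differential operators `𝒟_{R/k} = ⋃_{n ≥ 0} D^(n)`. -/
def GD : Set (R →ₗ[k] R) := ⋃ n : ℕ, D k R n

/-- The kernel `I` of the multiplication map `μ : R ⊗[k] R → R`. -/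
def Ik : Ideal (R ⊗[k] R) := RingHom.ker (Algebra.TensorProduct.lmul' k (S := R))

variable {k R}

lemma zero_mem_Dm (n : ℕ) : (0 : R →ₗ[k] R) ∈ Dm k R n := by
  induction n with
  | zero => rfl
  | succ n ih =>
    intro r
    simpa using ih

lemma add_mem_Dm {n : ℕ} {f g : R →ₗ[k] R} (hf : f ∈ Dm k R n) (hg : g ∈ Dm k R n) :
    f + g ∈ Dm k R n := by
  induction n generalizing f g with
  | zero =>
    simp only [Dm, Set.mem_singleton_iff] at *
    rw [hf, hg, add_zero]
  | succ n ih =>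
    intro r
    have h : (f + g) ∘ₗ LinearMap.mulLeft k r - LinearMap.mulLeft k r ∘ₗ (f + g)
        = (f ∘ₗ LinearMap.mulLeft k r - LinearMap.mulLeft k r ∘ₗ f)
          + (g ∘ₗ LinearMap.mulLeft k r - LinearMap.mulLeft k r ∘ₗ g) := by
      rw [LinearMap.add_comp, LinearMap.comp_add]; abel
    show _ ∈ Dm k R n
    rw [h]
    exact ih (hf r) (hg r)

lemma mulLeft_comp_mem_Dm {n : ℕ} (s : R) {f : R →ₗ[k] R} (hf : f ∈ Dm k R n) :
    LinearMap.mulLeft k s ∘ₗ f ∈ Dm k R n := by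
  induction n generalizing f with
  | zero =>
    simp only [Dm, Set.mem_singleton_iff] at *
    rw [hf, LinearMap.comp_zero]
  | succ n ih =>
    intro r
    have h : (LinearMap.mulLeft k s ∘ₗ f) ∘ₗ LinearMap.mulLeft k r
        - LinearMap.mulLeft k r ∘ₗ (LinearMap.mulLeft k s ∘ₗ f)
        = LinearMap.mulLeft k s ∘ₗ (f ∘ₗ LinearMap.mulLeft k r - LinearMap.mulLeft k r ∘ₗ f) := by
      ext x
      simp [mul_sub, mul_left_comm]
    exact h ▸ ih (hf r)

lemma Dm_subset_succ (n : ℕ) : Dm k R n ⊆ Dm k R (n + 1) := by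
  induction n with
  | zero =>
    intro f hf
    have hf0 : f = 0 := hf
    subst hf0
    exact zero_mem_Dm 1
  | succ n ih =>
    intro f hf r
    exact ih (hf r)

lemma Dm_mono {m n : ℕ} (h : m ≤ n) : Dm k R m ⊆ Dm k R n := by
  induction h with
  | refl => exact le_rfl
  | step _ ih => exact ih.trans (Dm_subset_succ _)

lemma sum_mem_Dm {ι : Type*} {n : ℕ} {s : Finset ι} {f : ι → (R →ₗ[k] R)}
    (h : ∀ i ∈ s, f i ∈ Dm k R n) : (∑ i ∈ s, f i) ∈ Dm k R n :=
  Finset.sum_induction f (· ∈ Dm k R n) (fun _ _ ha hb => add_mem_Dm ha hb) (zero_mem_Dm n) h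

open Polynomial Finset

lemma hasse_comm (n : ℕ) (r : ℤ[X]) :
    (hasseDeriv n : ℤ[X] →ₗ[ℤ] ℤ[X]) ∘ₗ LinearMap.mulLeft ℤ r
      - LinearMap.mulLeft ℤ r ∘ₗ hasseDeriv n
    = ∑ ij ∈ (antidiagonal n).filter (fun ij => ij.1 ≠ 0),
        LinearMap.mulLeft ℤ (hasseDeriv ij.1 r) ∘ₗ (hasseDeriv ij.2 : ℤ[X] →ₗ[ℤ] ℤ[X]) := by
  ext p
  simp only [LinearMap.sub_apply, LinearMap.comp_apply, LinearMap.mulLeft_apply,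
    LinearMap.coe_sum, Finset.sum_apply]
  rw [hasseDeriv_mul]
  rw [← Finset.sum_filter_add_sum_filter_not (antidiagonal n) (fun ij => ij.1 = 0)]
  have h1 : (antidiagonal n).filter (fun ij => ij.1 = 0) = {(0, n)} := by
    ext ⟨i, j⟩
    simp only [Finset.mem_filter, HasAntidiagonal.mem_antidiagonal, Finset.mem_singleton, Prod.mk.injEq]
    omega
  rw [h1]
  simp [sub_eq_iff_eq_add, add_comm]

lemma hasse_mem_Dm (n : ℕ) :
    (hasseDeriv n : ℤ[X] →ₗ[ℤ] ℤ[X]) ∈ Dm ℤ ℤ[X] (n + 1) := by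
  induction n using Nat.strong_induction_on with
  | _ n ih =>
    intro r
    rw [hasse_comm]
    refine sum_mem_Dm fun ij hij => ?_
    rw [Finset.mem_filter, HasAntidiagonal.mem_antidiagonal] at hij
    refine mulLeft_comp_mem_Dm _ (Dm_mono ?_ (ih ij.2 ?_))
    · omega
    · omega

lemma hasse_comm_X (n : ℕ) :
    (hasseDeriv (n + 1) : ℤ[X] →ₗ[ℤ] ℤ[X]) ∘ₗ LinearMap.mulLeft ℤ (X : ℤ[X])
      - LinearMap.mulLeft ℤ (X : ℤ[X]) ∘ₗ hasseDeriv (n + 1)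
    = (hasseDeriv n : ℤ[X] →ₗ[ℤ] ℤ[X]) := by
  rw [hasse_comm]
  rw [Finset.sum_eq_single (1, n)]
  · ext p; simp
  · rintro ⟨i, j⟩ hij hne
    rw [Finset.mem_filter, HasAntidiagonal.mem_antidiagonal] at hij
    have hi : 1 < i := by
      rcases hij with ⟨h1, h2⟩
      by_contra h
      push_neg at h
      interval_cases i
      · exact h2 rfl
      · exact hne (by simp; omega)
    rw [hasseDeriv_X _ hi]
    ext p; simp
  · intro h
    exact absurd (by rw [Finset.mem_filter, HasAntidiagonal.mem_antidiagonal]; exact ⟨by omega, by simp⟩) h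

lemma hasse_not_mem_Dm (n : ℕ) :
    (hasseDeriv n : ℤ[X] →ₗ[ℤ] ℤ[X]) ∉ Dm ℤ ℤ[X] n := by
  induction n with
  | zero =>
    intro h
    have h' : (hasseDeriv 0 : ℤ[X] →ₗ[ℤ] ℤ[X]) = 0 := h
    have := LinearMap.congr_fun h' (1 : ℤ[X])
    simp at this
  | succ n ih =>
    intro h
    have := h (X : ℤ[X])
    rw [hasse_comm_X] at this
    exact ih this


/-- For `k = ℤ` and `R = ℤ[X]`, the `n`-th Hasse derivative `h_n` belongs to
`D^(n)` for every `n ≥ 0`, and for `n ≥ 1` it does not belong to `D^(n−1)`. -/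
theorem hasseDeriv_mem_D :
    (∀ n : ℕ,
      (Polynomial.hasseDeriv n : Polynomial ℤ →ₗ[ℤ] Polynomial ℤ) ∈ D ℤ (Polynomial ℤ) n) ∧
    (∀ n : ℕ, 1 ≤ n →
      (Polynomial.hasseDeriv n : Polynomial ℤ →ₗ[ℤ] Polynomial ℤ) ∉ D ℤ (Polynomial ℤ) (n - 1)) := by
  constructor
  · exact hasse_mem_Dm
  · intro n hn
    have : n - 1 + 1 = n := by omega
    show _ ∉ Dm ℤ ℤ[X] (n - 1 + 1)
    rw [this]
    exact hasse_not_mem_Dm n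


end GrothDiff
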